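/- Let (E, sim, ser) be a comtrace alphabet. For each step sequence v there exists exactly one canonical step sequence u such that v ≡ u. -/

import Mathlib

variable {E : Type*}

/-- A step over a comtrace alphabet `(E, sim, ser)`: a nonempty finite set of events,
pairwise related by `sim`. -/
def IsStep [DecidableEq E] (sim : E → E → Prop) (A : Finset E) : Prop :=
  A.Nonempty ∧ ∀ a ∈ A, ∀ b ∈ A, a ≠ b → sim a b

/-- A step sequence: a finite list of steps. -/
def IsStepSeq [DecidableEq E] (sim : E → E → Prop) (u : List (Finset E)) : Prop :=
  ∀ A ∈ u, IsStep sim A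

/-- The generating relation of comtrace congruence:
`w·A·z ≈ w·B·C·z` whenever `A`, `B`, `C` are steps with `B ∪ C = A` and `B × C ⊆ ser`. -/
def CTBase [DecidableEq E] (sim ser : E → E → Prop) (u v : List (Finset E)) : Prop :=
  ∃ (w z : List (Finset E)) (A B C : Finset E),
    IsStepSeq sim w ∧ IsStepSeq sim z ∧
    IsStep sim A ∧ IsStep sim B ∧ IsStep sim C ∧
    B ∪ C = A ∧ (∀ b ∈ B, ∀ c ∈ C, ser b c) ∧
    u = w ++ A :: z ∧ v = w ++ B :: C :: z

/-- The least equivalence relation containing `base`. -/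
def LeastEquiv {α : Type*} (base : α → α → Prop) (x y : α) : Prop :=
  ∀ c : α → α → Prop, Equivalence c → (∀ a b, base a b → c a b) → c x y

/-- Comtrace congruence: the least equivalence relation containing `CTBase`. -/
def CTEquiv [DecidableEq E] (sim ser : E → E → Prop) :
    List (Finset E) → List (Finset E) → Prop :=
  LeastEquiv (CTBase sim ser)

/-- Forward dependency on steps: `(A, B) ∈ FD` iff there is a step `C ⊆ B` with
`A × C ⊆ ser` and `C × (B \ C) ⊆ ser`. -/
def FD [DecidableEq E] (sim ser : E → E → Prop) (A B : Finset E) : Prop :=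
  ∃ C : Finset E, IsStep sim C ∧ C ⊆ B ∧
    (∀ a ∈ A, ∀ c ∈ C, ser a c) ∧ (∀ c ∈ C, ∀ b ∈ B \ C, ser c b)

/-- A step sequence `A₁…A_k` is canonical iff `(Aᵢ, Aᵢ₊₁) ∉ FD` for all `1 ≤ i < k`. -/
def Canonical [DecidableEq E] (sim ser : E → E → Prop) (u : List (Finset E)) : Prop :=
  u.Chain' (fun A B => ¬ FD sim ser A B)

/-! ### Auxiliary development -/

set_option linter.unusedSectionVars false

namespace CTAux

variable [DecidableEq E]

/-- Prepend a possibly-empty set to a list of steps, dropping it if empty. -/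
def push (S : Finset E) (z : List (Finset E)) : List (Finset E) :=
  if S.Nonempty then S :: z else z

theorem push_of_nonempty {S : Finset E} (h : S.Nonempty) (z : List (Finset E)) :
    push S z = S :: z := if_pos h

theorem push_of_empty {S : Finset E} (h : ¬ S.Nonempty) (z : List (Finset E)) :
    push S z = z := if_neg h

theorem push_append (S : Finset E) (x y : List (Finset E)) :
    push S (x ++ y) = push S x ++ y := by
  unfold push; split <;> simp

/-- A single "fold" step: merge an `FD`-witness from a step into the preceding step. -/
def Fold (sim ser : E → E → Prop) (u v : List (Finset E)) : Prop :=
  ∃ (w z : List (Finset E)) (A B C : Finset E),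
    IsStepSeq sim w ∧ IsStepSeq sim z ∧ IsStep sim A ∧ IsStep sim B ∧ IsStep sim C ∧
    C ⊆ B ∧ (∀ a ∈ A, ∀ c ∈ C, ser a c) ∧ (∀ c ∈ C, ∀ b ∈ B \ C, ser c b) ∧
    u = w ++ A :: B :: z ∧ v = w ++ (A ∪ C) :: push (B \ C) z

section Basic

variable {sim ser : E → E → Prop}
variable (hsim_irr : ∀ a, ¬ sim a a) (hsim_symm : ∀ a b, sim a b → sim b a)
  (hser_sub : ∀ a b, ser a b → sim a b)

include hsim_irr hser_sub in
theorem ser_disjoint {A C : Finset E} (h : ∀ a ∈ A, ∀ c ∈ C, ser a c) :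
    ∀ x, x ∈ A → x ∈ C → False := fun x hx hx' =>
  hsim_irr x (hser_sub x x (h x hx x hx'))

omit hsim_irr hser_sub in
theorem step_subset {B S : Finset E} (hB : IsStep sim B) (hS : S ⊆ B) (hne : S.Nonempty) :
    IsStep sim S := ⟨hne, fun a ha b hb hab => hB.2 a (hS ha) b (hS hb) hab⟩

include hsim_symm hser_sub in
theorem step_union {A C : Finset E} (hA : IsStep sim A) (hC : IsStep sim C)
    (h : ∀ a ∈ A, ∀ c ∈ C, ser a c) : IsStep sim (A ∪ C) := by
  refine ⟨hA.1.mono Finset.subset_union_left, fun a ha b hb hab => ?_⟩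
  rcases Finset.mem_union.1 ha with ha | ha <;> rcases Finset.mem_union.1 hb with hb | hb
  · exact hA.2 a ha b hb hab
  · exact hser_sub _ _ (h a ha b hb)
  · exact hsim_symm _ _ (hser_sub _ _ (h b hb a ha))
  · exact hC.2 a ha b hb hab

theorem isStepSeq_append {u v : List (Finset E)} :
    IsStepSeq sim (u ++ v) ↔ IsStepSeq sim u ∧ IsStepSeq sim v := by
  constructor
  · intro h; exact ⟨fun A hA => h A (by simp [hA]), fun A hA => h A (by simp [hA])⟩
  · rintro ⟨h1, h2⟩ A hA; rcases List.mem_append.1 hA with h | h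
    · exact h1 A h
    · exact h2 A h

theorem isStepSeq_cons {A : Finset E} {u : List (Finset E)} :
    IsStepSeq sim (A :: u) ↔ IsStep sim A ∧ IsStepSeq sim u := by
  constructor
  · intro h; exact ⟨h A (by simp), fun B hB => h B (by simp [hB])⟩
  · rintro ⟨h1, h2⟩ B hB; rcases List.mem_cons.1 hB with h | h
    · exact h ▸ h1
    · exact h2 B h

theorem isStepSeq_push {S : Finset E} {z : List (Finset E)}
    (hS : S.Nonempty → IsStep sim S) (hz : IsStepSeq sim z) :
    IsStepSeq sim (push S z) := by
  unfold push; split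
  · exact isStepSeq_cons.2 ⟨hS ‹_›, hz⟩
  · exact hz

theorem Fold.stepSeq_left {u v : List (Finset E)} (h : Fold sim ser u v) :
    IsStepSeq sim u := by
  obtain ⟨w, z, A, B, C, hw, hz, hA, hB, hC, hCB, hs1, hs2, hu, hv⟩ := h
  subst hu
  exact isStepSeq_append.2 ⟨hw, isStepSeq_cons.2 ⟨hA, isStepSeq_cons.2 ⟨hB, hz⟩⟩⟩

include hsim_symm hser_sub in
theorem Fold.stepSeq_right {u v : List (Finset E)} (h : Fold sim ser u v) :
    IsStepSeq sim v := by
  obtain ⟨w, z, A, B, C, hw, hz, hA, hB, hC, hCB, hs1, hs2, hu, hv⟩ := h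
  subst hv
  refine isStepSeq_append.2 ⟨hw, isStepSeq_cons.2
    ⟨step_union hsim_symm hser_sub hA hC hs1, isStepSeq_push (fun hne => step_subset hB (Finset.sdiff_subset) hne) hz⟩⟩

end Basic

section Equiv

variable {sim ser : E → E → Prop}

theorem leastEquiv_refl {α : Type*} (base : α → α → Prop) (x : α) : LeastEquiv base x x :=
  fun _ hc _ => hc.refl x

theorem leastEquiv_symm {α : Type*} {base : α → α → Prop} {x y : α}
    (h : LeastEquiv base x y) : LeastEquiv base y x :=
  fun c hc hb => hc.symm (h c hc hb)

theorem leastEquiv_trans {α : Type*} {base : α → α → Prop} {x y z : α}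
    (h1 : LeastEquiv base x y) (h2 : LeastEquiv base y z) : LeastEquiv base x z :=
  fun c hc hb => hc.trans (h1 c hc hb) (h2 c hc hb)

theorem leastEquiv_of_base {α : Type*} {base : α → α → Prop} {x y : α}
    (h : base x y) : LeastEquiv base x y := fun _ _ hb => hb _ _ h

variable (hsim_irr : ∀ a, ¬ sim a a) (hsim_symm : ∀ a b, sim a b → sim b a)
  (hser_sub : ∀ a b, ser a b → sim a b)

include hsim_irr hsim_symm hser_sub in
theorem Fold.ctEquiv {u v : List (Finset E)} (h : Fold sim ser u v) :
    CTEquiv sim ser u v := by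
  obtain ⟨w, z, A, B, C, hw, hz, hA, hB, hC, hCB, hs1, hs2, hu, hv⟩ := h
  by_cases hne : (B \ C).Nonempty
  · -- partial fold: u ≡ w++A::C::(B\C)::z ≡ v
    have hBC : IsStep sim (B \ C) := step_subset hB Finset.sdiff_subset hne
    have h1 : CTBase sim ser u (w ++ A :: C :: (B \ C) :: z) := by
      refine ⟨w ++ [A], z, B, C, B \ C, ?_, hz, hB, hC, hBC, ?_, hs2, ?_, ?_⟩
      · exact isStepSeq_append.2 ⟨hw, isStepSeq_cons.2 ⟨hA, fun _ h => absurd h List.not_mem_nil⟩⟩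
      · exact Finset.union_sdiff_of_subset hCB
      · simp [hu]
      · simp
    have h2 : CTBase sim ser v (w ++ A :: C :: (B \ C) :: z) := by
      refine ⟨w, (B \ C) :: z, A ∪ C, A, C, hw, isStepSeq_cons.2 ⟨hBC, hz⟩,
        step_union hsim_symm hser_sub hA hC hs1, hA, hC, rfl, hs1, ?_, rfl⟩
      rw [hv, push_of_nonempty hne]
    exact leastEquiv_trans (leastEquiv_of_base h1) (leastEquiv_symm (leastEquiv_of_base h2))
  · -- complete fold: C = B, v ≡ u directly
    have hCB' : C = B := by
      have := Finset.sdiff_eq_empty_iff_subset.1 (Finset.not_nonempty_iff_eq_empty.1 hne)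
      exact Finset.Subset.antisymm hCB this
    subst hCB'
    have h1 : CTBase sim ser v u := by
      refine ⟨w, z, A ∪ C, A, C, hw, hz, step_union hsim_symm hser_sub hA hC hs1,
        hA, hC, rfl, hs1, ?_, hu⟩
      rw [hv, push_of_empty hne]
    exact leastEquiv_symm (leastEquiv_of_base h1)

end Equiv

section Measure

/-- Total number of events (with multiplicity) in a step sequence. -/
def size (u : List (Finset E)) : ℕ := (u.map Finset.card).sum

/-- Position-weighted measure `Σ (i+1)·|Aᵢ|`, decreasing under folds. -/
def mu : List (Finset E) → ℕ
  | [] => 0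
  | A :: t => A.card + size t + mu t

theorem size_append (x y : List (Finset E)) : size (x ++ y) = size x + size y := by
  simp [size]

theorem mu_append (x y : List (Finset E)) :
    mu (x ++ y) = mu x + mu y + x.length * size y := by
  induction x with
  | nil => simp [mu]
  | cons A t ih => simp [mu, ih, size_append]; ring

variable {sim ser : E → E → Prop}
variable (hsim_irr : ∀ a, ¬ sim a a) (hser_sub : ∀ a b, ser a b → sim a b)

include hsim_irr hser_sub in
theorem Fold.mu_lt {u v : List (Finset E)} (h : Fold sim ser u v) : mu v < mu u := by
  obtain ⟨w, z, A, B, C, hw, hz, hA, hB, hC, hCB, hs1, hs2, hu, hv⟩ := h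
  have hdisj : ∀ x, x ∈ A → x ∈ C → False := ser_disjoint hsim_irr hser_sub hs1
  have hcardAC : (A ∪ C).card = A.card + C.card := by
    rw [Finset.card_union_of_disjoint]
    exact Finset.disjoint_left.2 fun {x} hx hx' => hdisj x hx hx'
  have hcardBC : (B \ C).card = B.card - C.card := Finset.card_sdiff_of_subset hCB
  have hCle : C.card ≤ B.card := Finset.card_le_card hCB
  have hCpos : 0 < C.card := Finset.card_pos.2 hC.1
  subst hu hv
  rw [mu_append, mu_append]
  by_cases hne : (B \ C).Nonempty
  · rw [push_of_nonempty hne]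
    have hsz : size ((A ∪ C) :: (B \ C) :: z) = size (A :: B :: z) := by
      simp [size, hcardAC, hcardBC]; omega
    rw [hsz]
    have : mu ((A ∪ C) :: (B \ C) :: z) < mu (A :: B :: z) := by
      simp [mu, size, hcardAC, hcardBC]; omega
    omega
  · rw [push_of_empty hne]
    have hCBeq : C = B := Finset.Subset.antisymm hCB
      (Finset.sdiff_eq_empty_iff_subset.1 (Finset.not_nonempty_iff_eq_empty.1 hne))
    subst hCBeq
    have hsz : size ((A ∪ C) :: z) = size (A :: C :: z) := by
      simp [size, hcardAC]; omega
    rw [hsz]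
    have h1 : mu ((A ∪ C) :: z) < mu (A :: C :: z) := by
      simp [mu, size, hcardAC]; omega
    omega

end Measure

section ListSplit

theorem append_cons_cons_split {α : Type*} :
    ∀ (w₁ w₂ : List α) {a b c d : α} {z₁ z₂ : List α},
      w₁ ++ a :: b :: z₁ = w₂ ++ c :: d :: z₂ → w₁.length ≤ w₂.length →
      (w₁ = w₂ ∧ a = c ∧ b = d ∧ z₁ = z₂) ∨
      (w₂ = w₁ ++ [a] ∧ b = c ∧ z₁ = d :: z₂) ∨
      (∃ m, w₂ = w₁ ++ a :: b :: m ∧ z₁ = m ++ c :: d :: z₂)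
  | [], [], a, b, c, d, z₁, z₂, h, _ => by
    simp only [List.nil_append, List.cons.injEq] at h
    exact Or.inl ⟨rfl, h.1, h.2.1, h.2.2⟩
  | [], [x], a, b, c, d, z₁, z₂, h, _ => by
    simp only [List.nil_append, List.singleton_append, List.cons.injEq] at h
    exact Or.inr (Or.inl ⟨by simp [h.1], h.2.1, h.2.2⟩)
  | [], x :: y :: m, a, b, c, d, z₁, z₂, h, _ => by
    simp only [List.nil_append, List.cons_append, List.cons.injEq] at h
    exact Or.inr (Or.inr ⟨m, by simp [h.1, h.2.1], h.2.2⟩)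
  | x :: w₁, [], a, b, c, d, z₁, z₂, h, hl => by
    simp at hl
  | x :: w₁, y :: w₂, a, b, c, d, z₁, z₂, h, hl => by
    simp only [List.cons_append, List.cons.injEq] at h
    have hl' : w₁.length ≤ w₂.length := by simpa using hl
    rcases append_cons_cons_split w₁ w₂ h.2 hl' with ⟨h1, h2, h3, h4⟩ | ⟨h1, h2, h3⟩ | ⟨m, h1, h2⟩
    · exact Or.inl ⟨by simp [h.1, h1], h2, h3, h4⟩
    · exact Or.inr (Or.inl ⟨by simp [h.1, h1], h2, h3⟩)
    · exact Or.inr (Or.inr ⟨m, by simp [h.1, h1], h2⟩)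

end ListSplit

section Canon

variable {sim ser : E → E → Prop}

theorem rel_of_chain'_append {α : Type*} {R : α → α → Prop} :
    ∀ (w : List α) {a b : α} {z : List α}, List.Chain' R (w ++ a :: b :: z) → R a b
  | [], a, b, z, h => (List.isChain_cons_cons.1 h).1
  | _ :: w, a, b, z, h => rel_of_chain'_append w (List.IsChain.tail h)

theorem Canonical.no_fold {u v : List (Finset E)} (hc : Canonical sim ser u)
    (h : Fold sim ser u v) : False := by
  obtain ⟨w, z, A, B, C, hw, hz, hA, hB, hC, hCB, hs1, hs2, hu, hv⟩ := h
  subst hu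
  exact rel_of_chain'_append w hc ⟨C, hC, hCB, hs1, hs2⟩

theorem fold_of_not_canonical :
    ∀ {u : List (Finset E)}, IsStepSeq sim u → ¬ Canonical sim ser u →
      ∃ v, Fold sim ser u v := by
  intro u
  induction u with
  | nil => intro _ h; exact absurd List.isChain_nil h
  | cons A t ih =>
    intro hss hnc
    cases t with
    | nil => exact absurd (List.isChain_singleton A) hnc
    | cons B z =>
      have hA : IsStep sim A := hss A (by simp)
      have hB : IsStep sim B := hss B (by simp)
      have ht : IsStepSeq sim (B :: z) := fun S hS => hss S (by simp [hS])
      have hz : IsStepSeq sim z := fun S hS => hss S (by simp [hS])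
      by_cases hfd : FD sim ser A B
      · obtain ⟨C, hC, hCB, hs1, hs2⟩ := hfd
        exact ⟨(A ∪ C) :: push (B \ C) z,
          [], z, A, B, C, fun _ h => absurd h List.not_mem_nil, hz,
          hA, hB, hC, hCB, hs1, hs2, rfl, rfl⟩
      · have hnc' : ¬ Canonical sim ser (B :: z) := by
          intro hcan
          exact hnc (List.isChain_cons_cons.2 ⟨hfd, hcan⟩)
        obtain ⟨v, hv⟩ := ih ht hnc'
        obtain ⟨w, z', A', B', C', hw, hz', hA', hB', hC', hCB', hs1', hs2', hu', hv'⟩ := hv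
        refine ⟨A :: v, A :: w, z', A', B', C', isStepSeq_cons.2 ⟨hA, hw⟩, hz',
          hA', hB', hC', hCB', hs1', hs2', ?_, ?_⟩
        · rw [List.cons_append, ← hu']
        · rw [List.cons_append, ← hv']

/-- Reach a canonical form by folding, by strong induction on the measure. -/
theorem exists_canonical_reduct (hsim_irr : ∀ a, ¬ sim a a)
    (hsim_symm : ∀ a b, sim a b → sim b a) (hser_sub : ∀ a b, ser a b → sim a b) :
    ∀ (n : ℕ) (u : List (Finset E)), mu u ≤ n → IsStepSeq sim u →
      ∃ c, Relation.ReflTransGen (Fold sim ser) u c ∧ Canonical sim ser c := by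
  intro n
  induction n with
  | zero =>
    intro u hmu hss
    by_cases hc : Canonical sim ser u
    · exact ⟨u, Relation.ReflTransGen.refl, hc⟩
    · obtain ⟨v, hv⟩ := fold_of_not_canonical hss hc
      have := Fold.mu_lt hsim_irr hser_sub hv
      omega
  | succ n ih =>
    intro u hmu hss
    by_cases hc : Canonical sim ser u
    · exact ⟨u, Relation.ReflTransGen.refl, hc⟩
    · obtain ⟨v, hv⟩ := fold_of_not_canonical hss hc
      have hlt := Fold.mu_lt hsim_irr hser_sub hv
      obtain ⟨c, hrc, hcc⟩ := ih v (by omega) (Fold.stepSeq_right hsim_symm hser_sub hv)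
      exact ⟨c, Relation.ReflTransGen.head hv hrc, hcc⟩

end Canon

section Confluence

variable {sim ser : E → E → Prop}
variable (hsim_irr : ∀ a, ¬ sim a a) (hsim_symm : ∀ a b, sim a b → sim b a)
  (hser_sub : ∀ a b, ser a b → sim a b)

include hsim_irr hsim_symm hser_sub in
/-- Same-position join: after folding `C₁`, one can further fold (the rest of) `C₂`. -/
theorem same_pos_join (w z : List (Finset E)) (A B C₁ C₂ : Finset E)
    (hw : IsStepSeq sim w) (hz : IsStepSeq sim z)
    (hA : IsStep sim A) (hB : IsStep sim B) (hC₁ : IsStep sim C₁) (hC₂ : IsStep sim C₂)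
    (h1B : C₁ ⊆ B) (h2B : C₂ ⊆ B)
    (ha1 : ∀ a ∈ A, ∀ c ∈ C₁, ser a c) (hb1 : ∀ c ∈ C₁, ∀ b ∈ B \ C₁, ser c b)
    (ha2 : ∀ a ∈ A, ∀ c ∈ C₂, ser a c) (hb2 : ∀ c ∈ C₂, ∀ b ∈ B \ C₂, ser c b) :
    Relation.ReflTransGen (Fold sim ser)
      (w ++ (A ∪ C₁) :: push (B \ C₁) z)
      (w ++ (A ∪ (C₁ ∪ C₂)) :: push (B \ (C₁ ∪ C₂)) z) := by
  by_cases hsub : C₂ ⊆ C₁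
  · have h1 : C₁ ∪ C₂ = C₁ := Finset.union_eq_left.2 hsub
    rw [h1]
  · obtain ⟨x, hx2, hx1⟩ := Finset.not_subset.1 hsub
    have hne : (B \ C₁).Nonempty := ⟨x, Finset.mem_sdiff.2 ⟨h2B hx2, hx1⟩⟩
    have hCne : (C₂ \ C₁).Nonempty := ⟨x, Finset.mem_sdiff.2 ⟨hx2, hx1⟩⟩
    rw [push_of_nonempty hne]
    refine Relation.ReflTransGen.single ?_
    have e1 : (A ∪ C₁) ∪ (C₂ \ C₁) = A ∪ (C₁ ∪ C₂) := by
      ext y; simp only [Finset.mem_union, Finset.mem_sdiff]; tauto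
    have e2 : (B \ C₁) \ (C₂ \ C₁) = B \ (C₁ ∪ C₂) := by
      ext y; simp only [Finset.mem_union, Finset.mem_sdiff]; tauto
    have hfold : Fold sim ser (w ++ (A ∪ C₁) :: (B \ C₁) :: z)
        (w ++ ((A ∪ C₁) ∪ (C₂ \ C₁)) :: push ((B \ C₁) \ (C₂ \ C₁)) z) := by
      refine ⟨w, z, A ∪ C₁, B \ C₁, C₂ \ C₁, hw, hz,
        step_union hsim_symm hser_sub hA hC₁ ha1,
        step_subset hB Finset.sdiff_subset hne,
        step_subset hC₂ Finset.sdiff_subset hCne,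
        Finset.sdiff_subset_sdiff h2B (Finset.Subset.refl _), ?_, ?_, rfl, rfl⟩
      · intro a ha c hc
        rcases Finset.mem_union.1 ha with ha | ha
        · exact ha2 a ha c (Finset.sdiff_subset hc)
        · exact hb1 a ha c (Finset.sdiff_subset_sdiff h2B (Finset.Subset.refl _) hc)
      · intro c hc b hb
        rw [e2] at hb
        have hc' := Finset.mem_sdiff.1 hc
        have hb' := Finset.mem_sdiff.1 hb
        exact hb2 c hc'.1 b (Finset.mem_sdiff.2 ⟨hb'.1, fun hbc => hb'.2 (Finset.mem_union_right _ hbc)⟩)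
    rwa [e1, e2] at hfold

include hsim_irr hsim_symm hser_sub in
/-- Adjacent-position join. -/
theorem adj_join (w z : List (Finset E)) (A B D C₁ C₂ : Finset E)
    (hw : IsStepSeq sim w) (hz : IsStepSeq sim z)
    (hA : IsStep sim A) (hB : IsStep sim B) (hD : IsStep sim D)
    (hC₁ : IsStep sim C₁) (hC₂ : IsStep sim C₂)
    (h1B : C₁ ⊆ B) (h2D : C₂ ⊆ D)
    (ha1 : ∀ a ∈ A, ∀ c ∈ C₁, ser a c) (hb1 : ∀ c ∈ C₁, ∀ b ∈ B \ C₁, ser c b)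
    (ha2 : ∀ a ∈ B, ∀ c ∈ C₂, ser a c) (hb2 : ∀ c ∈ C₂, ∀ b ∈ D \ C₂, ser c b) :
    ∃ d, Relation.ReflTransGen (Fold sim ser) (w ++ (A ∪ C₁) :: push (B \ C₁) (D :: z)) d ∧
      Relation.ReflTransGen (Fold sim ser) (w ++ A :: (B ∪ C₂) :: push (D \ C₂) z) d := by
  have hdBC : ∀ x, x ∈ B → x ∈ C₂ → False := ser_disjoint hsim_irr hser_sub ha2
  have hAC₁ : IsStep sim (A ∪ C₁) := step_union hsim_symm hser_sub hA hC₁ ha1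
  have hBC₂ : IsStep sim (B ∪ C₂) := step_union hsim_symm hser_sub hB hC₂ ha2
  have eBC : (B ∪ C₂) \ C₁ = (B \ C₁) ∪ C₂ := by
    ext y
    simp only [Finset.mem_union, Finset.mem_sdiff]
    have h1 := fun hy => hdBC y (h1B hy)
    tauto
  have hsC₁ : ∀ c ∈ C₁, ∀ b ∈ (B ∪ C₂) \ C₁, ser c b := by
    intro c hc b hb
    rw [eBC] at hb
    rcases Finset.mem_union.1 hb with hb | hb
    · exact hb1 c hc b hb
    · exact ha2 c (h1B hc) b hb
  by_cases hne : (B \ C₁).Nonempty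
  · -- partial first fold; join in one step from each side
    refine ⟨w ++ (A ∪ C₁) :: ((B \ C₁) ∪ C₂) :: push (D \ C₂) z,
      Relation.ReflTransGen.single ?_, Relation.ReflTransGen.single ?_⟩
    · rw [push_of_nonempty hne]
      exact ⟨w ++ [A ∪ C₁], z, B \ C₁, D, C₂,
        isStepSeq_append.2 ⟨hw, isStepSeq_cons.2 ⟨hAC₁, fun _ h => absurd h List.not_mem_nil⟩⟩,
        hz, step_subset hB Finset.sdiff_subset hne, hD, hC₂, h2D,
        fun a ha c hc => ha2 a (Finset.mem_sdiff.1 ha).1 c hc, hb2, by simp, by simp⟩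
    · have hne' : ((B ∪ C₂) \ C₁).Nonempty := by
        rw [eBC]; exact hC₂.1.mono Finset.subset_union_right
      have hfold : Fold sim ser (w ++ A :: (B ∪ C₂) :: push (D \ C₂) z)
          (w ++ (A ∪ C₁) :: push ((B ∪ C₂) \ C₁) (push (D \ C₂) z)) :=
        ⟨w, push (D \ C₂) z, A, B ∪ C₂, C₁, hw,
          isStepSeq_push (fun h => step_subset hD Finset.sdiff_subset h) hz,
          hA, hBC₂, hC₁, h1B.trans Finset.subset_union_left, ha1, hsC₁, rfl, rfl⟩
      rwa [eBC, push_of_nonempty (hC₂.1.mono Finset.subset_union_right)] at hfold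
  · -- C₁ = B: first fold is a complete merge; join at v₁ itself
    have hC₁B : C₁ = B := Finset.Subset.antisymm h1B
      (Finset.sdiff_eq_empty_iff_subset.1 (Finset.not_nonempty_iff_eq_empty.1 hne))
    subst hC₁B
    rw [push_of_empty hne]
    refine ⟨w ++ (A ∪ C₁) :: D :: z, Relation.ReflTransGen.refl, ?_⟩
    have eC₂ : (C₁ ∪ C₂) \ C₁ = C₂ := by
      ext y
      simp only [Finset.mem_union, Finset.mem_sdiff]
      have h1 := hdBC y
      tauto
    -- first fold: pull C₁(=B) into A
    have hfold1 : Fold sim ser (w ++ A :: (C₁ ∪ C₂) :: push (D \ C₂) z)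
        (w ++ (A ∪ C₁) :: push ((C₁ ∪ C₂) \ C₁) (push (D \ C₂) z)) :=
      ⟨w, push (D \ C₂) z, A, C₁ ∪ C₂, C₁, hw,
        isStepSeq_push (fun h => step_subset hD Finset.sdiff_subset h) hz,
        hA, hBC₂, hC₁, Finset.subset_union_left, ha1, hsC₁, rfl, rfl⟩
    rw [eC₂, push_of_nonempty hC₂.1] at hfold1
    refine Relation.ReflTransGen.head hfold1 ?_
    -- second fold: merge C₂ with D \ C₂ back into D (if anything remains)
    by_cases hne2 : (D \ C₂).Nonempty
    · rw [push_of_nonempty hne2]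
      have eD : C₂ ∪ (D \ C₂) = D := by
        ext y
        simp only [Finset.mem_union, Finset.mem_sdiff]
        have : y ∈ C₂ → y ∈ D := fun hy => h2D hy
        tauto
      have eEmpty : ¬ ((D \ C₂) \ (D \ C₂)).Nonempty := by simp
      have hfold2 : Fold sim ser (w ++ (A ∪ C₁) :: C₂ :: (D \ C₂) :: z)
          (w ++ (A ∪ C₁) :: (C₂ ∪ (D \ C₂)) :: push ((D \ C₂) \ (D \ C₂)) z) :=
        ⟨w ++ [A ∪ C₁], z, C₂, D \ C₂, D \ C₂,
          isStepSeq_append.2 ⟨hw, isStepSeq_cons.2 ⟨hAC₁, fun _ h => absurd h List.not_mem_nil⟩⟩,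
          hz, hC₂, step_subset hD Finset.sdiff_subset hne2,
          step_subset hD Finset.sdiff_subset hne2, Finset.Subset.refl _,
          fun a ha c hc => hb2 a ha c hc, fun c hc b hb => absurd hb (by simp), by simp, by simp⟩
      rw [eD, push_of_empty eEmpty] at hfold2
      exact Relation.ReflTransGen.single hfold2
    · rw [push_of_empty hne2]
      have hC₂D : C₂ = D := Finset.Subset.antisymm h2D
        (Finset.sdiff_eq_empty_iff_subset.1 (Finset.not_nonempty_iff_eq_empty.1 hne2))
      rw [hC₂D]

include hsim_irr hsim_symm hser_sub in
theorem fold_lc_aux {u v₁ v₂ : List (Finset E)}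
    (h₁ : Fold sim ser u v₁) (h₂ : Fold sim ser u v₂)
    (w₁ z₁ : List (Finset E)) (A₁ B₁ C₁ : Finset E)
    (hw₁ : IsStepSeq sim w₁) (hz₁ : IsStepSeq sim z₁)
    (hA₁ : IsStep sim A₁) (hB₁ : IsStep sim B₁) (hC₁ : IsStep sim C₁)
    (hCB₁ : C₁ ⊆ B₁) (hs1₁ : ∀ a ∈ A₁, ∀ c ∈ C₁, ser a c)
    (hs2₁ : ∀ c ∈ C₁, ∀ b ∈ B₁ \ C₁, ser c b)
    (hu₁ : u = w₁ ++ A₁ :: B₁ :: z₁) (hv₁ : v₁ = w₁ ++ (A₁ ∪ C₁) :: push (B₁ \ C₁) z₁)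
    (w₂ z₂ : List (Finset E)) (A₂ B₂ C₂ : Finset E)
    (hw₂ : IsStepSeq sim w₂) (hz₂ : IsStepSeq sim z₂)
    (hA₂ : IsStep sim A₂) (hB₂ : IsStep sim B₂) (hC₂ : IsStep sim C₂)
    (hCB₂ : C₂ ⊆ B₂) (hs1₂ : ∀ a ∈ A₂, ∀ c ∈ C₂, ser a c)
    (hs2₂ : ∀ c ∈ C₂, ∀ b ∈ B₂ \ C₂, ser c b)
    (hu₂ : u = w₂ ++ A₂ :: B₂ :: z₂) (hv₂ : v₂ = w₂ ++ (A₂ ∪ C₂) :: push (B₂ \ C₂) z₂)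
    (hlen : w₁.length ≤ w₂.length) :
    ∃ d, Relation.ReflTransGen (Fold sim ser) v₁ d ∧
      Relation.ReflTransGen (Fold sim ser) v₂ d := by
  have heq : w₁ ++ A₁ :: B₁ :: z₁ = w₂ ++ A₂ :: B₂ :: z₂ := hu₁ ▸ hu₂
  rcases append_cons_cons_split w₁ w₂ heq hlen with
    ⟨e1, e2, e3, e4⟩ | ⟨e1, e2, e3⟩ | ⟨m, e1, e2⟩
  · -- same position
    subst e1; subst e2; subst e3; subst e4; subst hv₁; subst hv₂
    refine ⟨w₁ ++ (A₁ ∪ (C₁ ∪ C₂)) :: push (B₁ \ (C₁ ∪ C₂)) z₁, ?_, ?_⟩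
    · exact same_pos_join hsim_irr hsim_symm hser_sub w₁ z₁ A₁ B₁ C₁ C₂ hw₁ hz₁
        hA₁ hB₁ hC₁ hC₂ hCB₁ hCB₂ hs1₁ hs2₁ hs1₂ hs2₂
    · rw [show C₁ ∪ C₂ = C₂ ∪ C₁ from Finset.union_comm _ _]
      exact same_pos_join hsim_irr hsim_symm hser_sub w₁ z₁ A₁ B₁ C₂ C₁ hw₁ hz₁
        hA₁ hB₁ hC₂ hC₁ hCB₂ hCB₁ hs1₂ hs2₂ hs1₁ hs2₁
  · -- adjacent positions
    subst e1; subst e2; subst e3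
    subst hv₁; subst hv₂
    have hz₂' : IsStepSeq sim (B₂ :: z₂) := fun S hS => hz₁ S hS
    have hD : IsStep sim B₂ := hz₂' B₂ (by simp)
    have hz₂'' : IsStepSeq sim z₂ := fun S hS => hz₂' S (by simp [hS])
    obtain ⟨d, hd1, hd2⟩ := adj_join hsim_irr hsim_symm hser_sub w₁ z₂ A₁ B₁ B₂ C₁ C₂
      hw₁ hz₂'' hA₁ hB₁ hD hC₁ hC₂ hCB₁ hCB₂ hs1₁ hs2₁ hs1₂ hs2₂
    refine ⟨d, hd1, ?_⟩
    simpa using hd2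
  · -- distant positions
    subst e1; subst e2; subst hv₁; subst hv₂
    have hm : IsStepSeq sim m := fun S hS => hz₁ S (by simp [hS])
    refine ⟨w₁ ++ (A₁ ∪ C₁) :: push (B₁ \ C₁) (m ++ (A₂ ∪ C₂) :: push (B₂ \ C₂) z₂),
      Relation.ReflTransGen.single ?_, Relation.ReflTransGen.single ?_⟩
    · -- fold the second redex inside v₁
      have hfold : Fold sim ser
          ((w₁ ++ (A₁ ∪ C₁) :: push (B₁ \ C₁) m) ++ A₂ :: B₂ :: z₂)
          ((w₁ ++ (A₁ ∪ C₁) :: push (B₁ \ C₁) m) ++ (A₂ ∪ C₂) :: push (B₂ \ C₂) z₂) :=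
        ⟨w₁ ++ (A₁ ∪ C₁) :: push (B₁ \ C₁) m, z₂, A₂, B₂, C₂,
          isStepSeq_append.2 ⟨hw₁, isStepSeq_cons.2
            ⟨step_union hsim_symm hser_sub hA₁ hC₁ hs1₁,
             isStepSeq_push (fun h => step_subset hB₁ Finset.sdiff_subset h) hm⟩⟩,
          hz₂, hA₂, hB₂, hC₂, hCB₂, hs1₂, hs2₂, rfl, rfl⟩
      have e3 : (w₁ ++ (A₁ ∪ C₁) :: push (B₁ \ C₁) m) ++ A₂ :: B₂ :: z₂
          = w₁ ++ (A₁ ∪ C₁) :: push (B₁ \ C₁) (m ++ A₂ :: B₂ :: z₂) := by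
        rw [push_append]; simp
      have e4 : (w₁ ++ (A₁ ∪ C₁) :: push (B₁ \ C₁) m) ++ (A₂ ∪ C₂) :: push (B₂ \ C₂) z₂
          = w₁ ++ (A₁ ∪ C₁) :: push (B₁ \ C₁) (m ++ (A₂ ∪ C₂) :: push (B₂ \ C₂) z₂) := by
        rw [push_append]; simp
      rw [e3, e4] at hfold
      exact hfold
    · -- fold the first redex inside v₂
      have hfold : Fold sim ser
          (w₁ ++ A₁ :: B₁ :: (m ++ (A₂ ∪ C₂) :: push (B₂ \ C₂) z₂))
          (w₁ ++ (A₁ ∪ C₁) :: push (B₁ \ C₁) (m ++ (A₂ ∪ C₂) :: push (B₂ \ C₂) z₂)) :=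
        ⟨w₁, m ++ (A₂ ∪ C₂) :: push (B₂ \ C₂) z₂, A₁, B₁, C₁, hw₁,
          isStepSeq_append.2 ⟨hm, isStepSeq_cons.2
            ⟨step_union hsim_symm hser_sub hA₂ hC₂ hs1₂,
             isStepSeq_push (fun h => step_subset hB₂ Finset.sdiff_subset h) hz₂⟩⟩,
          hA₁, hB₁, hC₁, hCB₁, hs1₁, hs2₁, rfl, rfl⟩
      have e3 : w₁ ++ A₁ :: B₁ :: (m ++ (A₂ ∪ C₂) :: push (B₂ \ C₂) z₂)
          = (w₁ ++ A₁ :: B₁ :: m) ++ (A₂ ∪ C₂) :: push (B₂ \ C₂) z₂ := by simp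
      rw [e3] at hfold
      exact hfold

include hsim_irr hsim_symm hser_sub in
theorem fold_locally_confluent {u v₁ v₂ : List (Finset E)}
    (h₁ : Fold sim ser u v₁) (h₂ : Fold sim ser u v₂) :
    ∃ d, Relation.ReflTransGen (Fold sim ser) v₁ d ∧
      Relation.ReflTransGen (Fold sim ser) v₂ d := by
  obtain ⟨w₁, z₁, A₁, B₁, C₁, hw₁, hz₁, hA₁, hB₁, hC₁, hCB₁, hs1₁, hs2₁, hu₁, hv₁⟩ := h₁
  obtain ⟨w₂, z₂, A₂, B₂, C₂, hw₂, hz₂, hA₂, hB₂, hC₂, hCB₂, hs1₂, hs2₂, hu₂, hv₂⟩ := h₂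
  rcases le_total w₁.length w₂.length with hlen | hlen
  · exact fold_lc_aux hsim_irr hsim_symm hser_sub
      ⟨w₁, z₁, A₁, B₁, C₁, hw₁, hz₁, hA₁, hB₁, hC₁, hCB₁, hs1₁, hs2₁, hu₁, hv₁⟩
      ⟨w₂, z₂, A₂, B₂, C₂, hw₂, hz₂, hA₂, hB₂, hC₂, hCB₂, hs1₂, hs2₂, hu₂, hv₂⟩
      w₁ z₁ A₁ B₁ C₁ hw₁ hz₁ hA₁ hB₁ hC₁ hCB₁ hs1₁ hs2₁ hu₁ hv₁
      w₂ z₂ A₂ B₂ C₂ hw₂ hz₂ hA₂ hB₂ hC₂ hCB₂ hs1₂ hs2₂ hu₂ hv₂ hlen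
  · obtain ⟨d, hd2, hd1⟩ := fold_lc_aux hsim_irr hsim_symm hser_sub
      ⟨w₂, z₂, A₂, B₂, C₂, hw₂, hz₂, hA₂, hB₂, hC₂, hCB₂, hs1₂, hs2₂, hu₂, hv₂⟩
      ⟨w₁, z₁, A₁, B₁, C₁, hw₁, hz₁, hA₁, hB₁, hC₁, hCB₁, hs1₁, hs2₁, hu₁, hv₁⟩
      w₂ z₂ A₂ B₂ C₂ hw₂ hz₂ hA₂ hB₂ hC₂ hCB₂ hs1₂ hs2₂ hu₂ hv₂
      w₁ z₁ A₁ B₁ C₁ hw₁ hz₁ hA₁ hB₁ hC₁ hCB₁ hs1₁ hs2₁ hu₁ hv₁ hlen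
    exact ⟨d, hd1, hd2⟩

end Confluence

section Newman

variable {sim ser : E → E → Prop}
variable (hsim_irr : ∀ a, ¬ sim a a) (hsim_symm : ∀ a b, sim a b → sim b a)
  (hser_sub : ∀ a b, ser a b → sim a b)

include hsim_irr hsim_symm hser_sub in
/-- Newman's lemma for `Fold`, by induction on the measure. -/
theorem fold_confluent :
    ∀ (n : ℕ) (u v₁ v₂ : List (Finset E)), mu u ≤ n →
      Relation.ReflTransGen (Fold sim ser) u v₁ →
      Relation.ReflTransGen (Fold sim ser) u v₂ →
      ∃ d, Relation.ReflTransGen (Fold sim ser) v₁ d ∧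
        Relation.ReflTransGen (Fold sim ser) v₂ d := by
  intro n
  induction n with
  | zero =>
    intro u v₁ v₂ hmu h1 h2
    rcases h1.cases_head with rfl | ⟨x₁, hx₁, hx₁'⟩
    · exact ⟨v₂, h2, Relation.ReflTransGen.refl⟩
    · have := Fold.mu_lt hsim_irr hser_sub hx₁; omega
  | succ n ih =>
    intro u v₁ v₂ hmu h1 h2
    rcases h1.cases_head with rfl | ⟨x₁, hx₁, hx₁'⟩
    · exact ⟨v₂, h2, Relation.ReflTransGen.refl⟩
    rcases h2.cases_head with rfl | ⟨x₂, hx₂, hx₂'⟩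
    · exact ⟨v₁, Relation.ReflTransGen.refl, h1⟩
    have hm₁ : mu x₁ ≤ n := by have := Fold.mu_lt hsim_irr hser_sub hx₁; omega
    have hm₂ : mu x₂ ≤ n := by have := Fold.mu_lt hsim_irr hser_sub hx₂; omega
    obtain ⟨e, he₁, he₂⟩ := fold_locally_confluent hsim_irr hsim_symm hser_sub hx₁ hx₂
    obtain ⟨f, hf₁, hf₂⟩ := ih x₁ v₁ e hm₁ hx₁' he₁
    obtain ⟨d, hd₂, hdf⟩ := ih x₂ v₂ f hm₂ hx₂' (he₂.trans hf₂)
    exact ⟨d, hf₁.trans hdf, hd₂⟩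

end Newman

section Bridge

variable {sim ser : E → E → Prop}
variable (hsim_irr : ∀ a, ¬ sim a a) (hsim_symm : ∀ a b, sim a b → sim b a)
  (hser_sub : ∀ a b, ser a b → sim a b)

include hsim_symm hser_sub in
theorem rtg_stepSeq {u c : List (Finset E)} (hu : IsStepSeq sim u)
    (h : Relation.ReflTransGen (Fold sim ser) u c) : IsStepSeq sim c := by
  induction h with
  | refl => exact hu
  | tail _ h₂ ih => exact Fold.stepSeq_right hsim_symm hser_sub h₂

include hsim_irr hsim_symm hser_sub in
theorem rtg_ctEquiv {u c : List (Finset E)}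
    (h : Relation.ReflTransGen (Fold sim ser) u c) : CTEquiv sim ser u c := by
  induction h with
  | refl => exact leastEquiv_refl _ _
  | tail _ h₂ ih =>
    exact leastEquiv_trans ih (Fold.ctEquiv hsim_irr hsim_symm hser_sub h₂)

theorem canonical_rtg_eq {c d : List (Finset E)} (hc : Canonical sim ser c)
    (h : Relation.ReflTransGen (Fold sim ser) c d) : c = d := by
  rcases h.cases_head with rfl | ⟨x, hx, _⟩
  · rfl
  · exact absurd hx (fun hf => Canonical.no_fold hc hf)

theorem ctBase_fold {x y : List (Finset E)} (h : CTBase sim ser x y) :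
    Fold sim ser y x := by
  obtain ⟨w, z, A, B, C, hw, hz, hA, hB, hC, hBC, hser, hx, hy⟩ := h
  refine ⟨w, z, B, C, C, hw, hz, hB, hC, hC, Finset.Subset.refl _, hser, ?_, hy, ?_⟩
  · intro c hc b hb
    exact absurd hb (by simp)
  · rw [hx, ← hBC, push_of_empty (by simp)]

include hsim_irr hsim_symm hser_sub in
theorem ctEquiv_join {x y : List (Finset E)} (h : CTEquiv sim ser x y) :
    ∃ d, Relation.ReflTransGen (Fold sim ser) x d ∧
      Relation.ReflTransGen (Fold sim ser) y d := by
  refine h (fun a b => ∃ d, Relation.ReflTransGen (Fold sim ser) a d ∧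
      Relation.ReflTransGen (Fold sim ser) b d) ⟨?_, ?_, ?_⟩ ?_
  · exact fun a => ⟨a, Relation.ReflTransGen.refl, Relation.ReflTransGen.refl⟩
  · rintro a b ⟨d, h1, h2⟩; exact ⟨d, h2, h1⟩
  · rintro a b c ⟨d₁, h1, h2⟩ ⟨d₂, h3, h4⟩
    obtain ⟨e, he₁, he₂⟩ := fold_confluent hsim_irr hsim_symm hser_sub (mu b) b d₁ d₂
      le_rfl h2 h3
    exact ⟨e, h1.trans he₁, h4.trans he₂⟩
  · intro a b hab
    exact ⟨a, Relation.ReflTransGen.refl, Relation.ReflTransGen.single (ctBase_fold hab)⟩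

end Bridge

end CTAux

/-- Each step sequence is congruent to exactly one canonical step sequence. -/
theorem stmt8 [DecidableEq E] [Fintype E] (sim ser : E → E → Prop)
    (hsim_irr : ∀ a, ¬ sim a a) (hsim_symm : ∀ a b, sim a b → sim b a)
    (hser_sub : ∀ a b, ser a b → sim a b)
    (v : List (Finset E)) (hv : IsStepSeq sim v) :
    ∃! u : List (Finset E),
      IsStepSeq sim u ∧ Canonical sim ser u ∧ CTEquiv sim ser v u := by
  obtain ⟨c, hrc, hcc⟩ := CTAux.exists_canonical_reduct hsim_irr hsim_symm hser_sub
    (CTAux.mu v) v le_rfl hv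
  refine ⟨c, ⟨CTAux.rtg_stepSeq hsim_symm hser_sub hv hrc, hcc,
    CTAux.rtg_ctEquiv hsim_irr hsim_symm hser_sub hrc⟩, ?_⟩
  rintro u ⟨hsu, hcu, hequ⟩
  have hcu_c : CTEquiv sim ser u c :=
    CTAux.leastEquiv_trans (CTAux.leastEquiv_symm hequ)
      (CTAux.rtg_ctEquiv hsim_irr hsim_symm hser_sub hrc)
  obtain ⟨d, h1, h2⟩ := CTAux.ctEquiv_join hsim_irr hsim_symm hser_sub hcu_c
  rw [CTAux.canonical_rtg_eq hcu h1, CTAux.canonical_rtg_eq hcc h2]
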